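/- arXiv:1201.3026 — 2 statements merged into one kernel-verified Lean document; each statement's English description precedes it below -/
import Mathlib

section
/- Let H be a complex Hilbert space, H₁ and H₂ closed subspaces of H, and P₁, P₂ the orthogonal projections onto H₁ and H₂. Then the following are equivalent: (1) H₁ ∩ H₂ = 0 and H₁ + H₂ is closed in H; (2) ‖P₁P₂‖ < 1. -/
set_option maxHeartbeats 1000000


/-- The orthogonal projection of a Hilbert space `H` onto a complete (closed) subspace `K`,
viewed as a continuous linear operator `H →L[ℂ] H`. -/
noncomputable def proj {H : Type*} [NormedAddCommGroup H] [InnerProductSpace ℂ H]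
    (K : Submodule ℂ H) [CompleteSpace K] : H →L[ℂ] H :=
  K.subtypeL.comp (K.orthogonalProjectionOnto)

section aux

variable {H : Type*} [NormedAddCommGroup H] [InnerProductSpace ℂ H]

/-- For `x ∈ H₁`, `y ∈ H₂`, we have `⟪x, y⟫ = ⟪x, P₁ P₂ y⟫`. -/
lemma stmt5_inner_eq [CompleteSpace H] (H₁ H₂ : Submodule ℂ H)
    [CompleteSpace H₁] [CompleteSpace H₂]
    {x y : H} (hx : x ∈ H₁) (hy : y ∈ H₂) :
    (inner ℂ x y) = inner ℂ x ((proj H₁ * proj H₂) y) := by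
  have h2 : (H₂.orthogonalProjectionOnto y : H) = y := by
    rw [← Submodule.starProjection_apply, Submodule.starProjection_eq_self_iff]; exact hy
  have h1 : (H₁.orthogonalProjectionOnto x : H) = x := by
    rw [← Submodule.starProjection_apply, Submodule.starProjection_eq_self_iff]; exact hx
  have := H₁.inner_starProjection_left_eq_right x y; simp only [Submodule.starProjection_apply] at this
  rw [h1] at this
  simp only [proj, ContinuousLinearMap.mul_apply, ContinuousLinearMap.comp_apply,
    Submodule.subtypeL_apply, h2]
  exact this

/-- Phase rotation and scaling: a lower bound on norms of sums gives an upper bound on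
inner products between the two subspaces. -/
lemma stmt5_inner_bound (H₁ H₂ : Submodule ℂ H) {ε : ℝ} (hε1 : ε ≤ 1)
    (h : ∀ x ∈ H₁, ∀ y ∈ H₂, ε * (‖x‖ ^ 2 + ‖y‖ ^ 2) ≤ ‖x + y‖ ^ 2)
    {x y : H} (hx : x ∈ H₁) (hy : y ∈ H₂) :
    ‖(inner ℂ x y)‖ ≤ (1 - ε) * (‖x‖ * ‖y‖) := by
  set z : ℂ := inner ℂ x y with hz
  by_cases hz0 : z = 0
  · rw [hz0]
    have h1 : (0:ℝ) ≤ 1 - ε := by linarith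
    simp
    positivity
  have hx0 : x ≠ 0 := by rintro rfl; simp [hz] at hz0
  have hy0 : y ≠ 0 := by rintro rfl; simp [hz] at hz0
  set a := ‖x‖ with ha
  set b := ‖y‖ with hb
  have ha0 : 0 < a := norm_pos_iff.2 hx0
  have hb0 : 0 < b := norm_pos_iff.2 hy0
  set d := ‖z‖ with hd
  have hd0 : 0 < d := norm_pos_iff.2 hz0
  set t := Real.sqrt (b / a) with ht
  have ht0 : 0 < t := Real.sqrt_pos.2 (by positivity)
  have ht2 : t ^ 2 = b / a := Real.sq_sqrt (by positivity)
  set c : ℂ := -z / (d : ℂ) with hc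
  set x' := ((t : ℂ) * c) • x with hx'
  set y' := ((t : ℂ))⁻¹ • y with hy'
  have hx'm : x' ∈ H₁ := H₁.smul_mem _ hx
  have hy'm : y' ∈ H₂ := H₂.smul_mem _ hy
  have hnc : ‖c‖ = 1 := by
    rw [hc, norm_div, norm_neg, Complex.norm_real, Real.norm_eq_abs, abs_of_pos hd0, ← hd,
      div_self hd0.ne']
  have hnx' : ‖x'‖ = t * a := by
    rw [hx', norm_smul, norm_mul, hnc, mul_one, Complex.norm_real, Real.norm_eq_abs,
      abs_of_pos ht0]
  have hny' : ‖y'‖ = t⁻¹ * b := by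
    rw [hy', norm_smul, norm_inv, Complex.norm_real, Real.norm_eq_abs, abs_of_pos ht0]
  have hnx'2 : ‖x'‖ ^ 2 = a * b := by
    rw [hnx', mul_pow, ht2]; field_simp
  have hny'2 : ‖y'‖ ^ 2 = a * b := by
    rw [hny', mul_pow, inv_pow, ht2]; field_simp
  have hinner : (inner ℂ x' y') = ((-d : ℝ) : ℂ) := by
    rw [hx', hy', inner_smul_left, inner_smul_right, ← hz, map_mul]
    have hconj_t : (starRingEnd ℂ) (t : ℂ) = (t : ℂ) := Complex.conj_ofReal t
    have hconj_c : (starRingEnd ℂ) c = -(starRingEnd ℂ) z / (d : ℂ) := by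
      rw [hc, map_div₀, map_neg, Complex.conj_ofReal]
    have hmc : (starRingEnd ℂ) z * z = ((d : ℂ)) ^ 2 := by
      exact_mod_cast RCLike.conj_mul z
    have htne : (t : ℂ) ≠ 0 := by exact_mod_cast ht0.ne'
    have hdne : (d : ℂ) ≠ 0 := by exact_mod_cast hd0.ne'
    rw [hconj_t, hconj_c]
    field_simp
    rw [hmc]; push_cast
    ring
  have hre : RCLike.re (inner ℂ x' y') = -d := by rw [hinner]; simp
  have hsum := h x' hx'm y' hy'm
  rw [norm_add_sq (𝕜 := ℂ), hre, hnx'2, hny'2] at hsum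
  nlinarith [hsum]

/-- A uniform bound on inner products between the subspaces bounds `‖P₁ P₂‖`. -/
lemma stmt5_opNorm_le [CompleteSpace H] (H₁ H₂ : Submodule ℂ H)
    [CompleteSpace H₁] [CompleteSpace H₂] {k : ℝ} (hk : 0 ≤ k)
    (h : ∀ x ∈ H₁, ∀ y ∈ H₂, ‖(inner ℂ x y)‖ ≤ k * (‖x‖ * ‖y‖)) :
    ‖proj H₁ * proj H₂‖ ≤ k := by
  refine ContinuousLinearMap.opNorm_le_bound _ hk fun u => ?_
  set a : H := ↑(Submodule.orthogonalProjectionOnto H₂ u) with hA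
  set b : H := ↑(Submodule.orthogonalProjectionOnto H₁ a) with hB
  have happ : (proj H₁ * proj H₂) u = b := by
    simp [proj, ContinuousLinearMap.mul_apply, hA, hB]
  rw [happ]
  have hbm : b ∈ H₁ := (Submodule.orthogonalProjectionOnto H₁ a).2
  have ham : a ∈ H₂ := (Submodule.orthogonalProjectionOnto H₂ u).2
  have horth : (inner ℂ b (a - b)) = 0 :=
    (Submodule.mem_orthogonal H₁ _).1 (H₁.sub_starProjection_mem_orthogonal a) b hbm
  have hba : (inner ℂ b a) = inner ℂ b b := by
    have := inner_sub_right (𝕜 := ℂ) b a b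
    rw [horth] at this
    linear_combination -this
  have hb2 : (‖b‖ : ℝ) ^ 2 ≤ ‖(inner ℂ b a)‖ := by
    rw [hba]
    rw [inner_self_eq_norm_sq_to_K (𝕜 := ℂ)]
    simp
  have hia := h b hbm a ham
  have hau : ‖a‖ ≤ ‖u‖ := by
    calc ‖a‖ = ‖Submodule.orthogonalProjectionOnto H₂ u‖ := rfl
    _ ≤ ‖H₂.orthogonalProjectionOnto‖ * ‖u‖ := H₂.orthogonalProjectionOnto.le_opNorm u
    _ ≤ 1 * ‖u‖ := by
        exact mul_le_mul_of_nonneg_right (Submodule.orthogonalProjectionOnto_norm_le H₂) (norm_nonneg u)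
    _ = ‖u‖ := one_mul _
  by_cases hb0 : ‖b‖ = 0
  · rw [hb0]; positivity
  have hbpos : 0 < ‖b‖ := lt_of_le_of_ne (norm_nonneg b) (Ne.symm hb0)
  have h1 : k * (‖b‖ * ‖a‖) ≤ k * (‖b‖ * ‖u‖) := by
    have : ‖b‖ * ‖a‖ ≤ ‖b‖ * ‖u‖ := mul_le_mul_of_nonneg_left hau hbpos.le
    exact mul_le_mul_of_nonneg_left this hk
  nlinarith

/-- The sum map `H₁ × H₂ →L[ℂ] H`. -/
noncomputable def stmt5_T (H₁ H₂ : Submodule ℂ H) : (H₁ × H₂) →L[ℂ] H :=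
  H₁.subtypeL.comp (ContinuousLinearMap.fst ℂ H₁ H₂) +
    H₂.subtypeL.comp (ContinuousLinearMap.snd ℂ H₁ H₂)

lemma stmt5_T_apply (H₁ H₂ : Submodule ℂ H) (p : H₁ × H₂) :
    stmt5_T H₁ H₂ p = (p.1 : H) + (p.2 : H) := rfl

lemma stmt5_T_range (H₁ H₂ : Submodule ℂ H) :
    Set.range (stmt5_T H₁ H₂) = ((H₁ ⊔ H₂ : Submodule ℂ H) : Set H) := by
  ext w
  simp only [Set.mem_range, SetLike.mem_coe, Submodule.mem_sup]
  constructor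
  · rintro ⟨⟨x, y⟩, rfl⟩
    exact ⟨x, x.2, y, y.2, rfl⟩
  · rintro ⟨u, hu, v, hv, rfl⟩
    exact ⟨(⟨u, hu⟩, ⟨v, hv⟩), rfl⟩

end aux

lemma stmt5_forward_final {H : Type*} [NormedAddCommGroup H] [InnerProductSpace ℂ H]
    [CompleteSpace H] (H₁ H₂ : Submodule ℂ H) [CompleteSpace H₁] [CompleteSpace H₂]
    {D : ℝ} (hD1 : 1 ≤ D)
    (hCb : ∀ x ∈ H₁, ∀ y ∈ H₂, max ‖x‖ ‖y‖ ≤ D * ‖x + y‖) :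
    ‖proj H₁ * proj H₂‖ < 1 := by
  have hD0 : (0:ℝ) < D := lt_of_lt_of_le one_pos hD1
  set ε := 1 / (2 * D ^ 2) with hε
  have hε0 : 0 < ε := by positivity
  have hε1 : ε ≤ 1 := by
    rw [hε, div_le_one (by positivity)]
    nlinarith
  have hsum : ∀ x ∈ H₁, ∀ y ∈ H₂, ε * (‖x‖ ^ 2 + ‖y‖ ^ 2) ≤ ‖x + y‖ ^ 2 := by
    intro x hx y hy
    have hbD := hCb x hx y hy
    have hxb : ‖x‖ ≤ D * ‖x + y‖ := (le_max_left _ _).trans hbD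
    have hyb : ‖y‖ ≤ D * ‖x + y‖ := (le_max_right _ _).trans hbD
    have hxb2 : ‖x‖ ^ 2 ≤ (D * ‖x + y‖) ^ 2 := pow_le_pow_left₀ (norm_nonneg x) hxb 2
    have hyb2 : ‖y‖ ^ 2 ≤ (D * ‖x + y‖) ^ 2 := pow_le_pow_left₀ (norm_nonneg y) hyb 2
    rw [mul_pow] at hxb2 hyb2
    rw [hε, div_mul_eq_mul_div, one_mul, div_le_iff₀ (by positivity)]
    nlinarith
  have hinner := fun x hx y hy => stmt5_inner_bound H₁ H₂ hε1 hsum (x := x) (y := y) hx hy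
  have hle : ‖proj H₁ * proj H₂‖ ≤ 1 - ε := stmt5_opNorm_le H₁ H₂ (by linarith) hinner
  have : (1:ℝ) - ε < 1 := by linarith
  exact lt_of_le_of_lt hle this

/-- `H₁ ∩ H₂ = 0` and `H₁ + H₂` closed iff `‖P₁P₂‖ < 1`. -/
theorem stmt5 {H : Type*} [NormedAddCommGroup H] [InnerProductSpace ℂ H] [CompleteSpace H]
    (H₁ H₂ : Submodule ℂ H) [CompleteSpace H₁] [CompleteSpace H₂] :
    (H₁ ⊓ H₂ = ⊥ ∧ IsClosed ((H₁ ⊔ H₂ : Submodule ℂ H) : Set H)) ↔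
      ‖proj H₁ * proj H₂‖ < 1 := by
  constructor
  · rintro ⟨hinf, hclosed⟩
    haveI : CompleteSpace ↥(H₁ ⊔ H₂) := hclosed.completeSpace_coe
    -- restrict the sum map to its (closed) range
    set T := stmt5_T H₁ H₂ with hT
    have hmem : ∀ p : H₁ × H₂, T p ∈ H₁ ⊔ H₂ := fun p => by
      rw [stmt5_T_apply]
      exact Submodule.add_mem _ (Submodule.mem_sup_left p.1.2) (Submodule.mem_sup_right p.2.2)
    set T' := T.codRestrict (H₁ ⊔ H₂) hmem with hT'
    have hker : LinearMap.ker (T' : H₁ × H₂ →ₗ[ℂ] ↥(H₁ ⊔ H₂)) = ⊥ := by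
      rw [LinearMap.ker_eq_bot']
      rintro ⟨x, y⟩ hxy
      have h0 : (x : H) + (y : H) = 0 := by
        have := congrArg (Subtype.val) hxy
        simpa [hT', hT, stmt5_T_apply] using this
      have hxeq : (x : H) = -(y : H) := eq_neg_of_add_eq_zero_left h0
      have hx2 : (x : H) ∈ H₂ := hxeq ▸ H₂.neg_mem y.2
      have hxbot : (x : H) ∈ H₁ ⊓ H₂ := ⟨x.2, hx2⟩
      rw [hinf] at hxbot
      have hx0 : (x : H) = 0 := hxbot
      have hy0 : (y : H) = 0 := by rw [hxeq] at hx0; simpa using hx0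
      exact Prod.ext (Subtype.ext hx0) (Subtype.ext hy0)
    have hrange : LinearMap.range (T' : H₁ × H₂ →ₗ[ℂ] ↥(H₁ ⊔ H₂)) = ⊤ := by
      rw [LinearMap.range_eq_top]
      rintro ⟨w, hw⟩
      obtain ⟨u, hu, v, hv, huv⟩ := Submodule.mem_sup.1 hw
      exact ⟨(⟨u, hu⟩, ⟨v, hv⟩), Subtype.ext (by simpa [hT', hT, stmt5_T_apply] using huv)⟩
    have hboundE : ∃ C : ℝ, ∀ p : H₁ × H₂, ‖p‖ ≤ C * ‖T p‖ := by
      set e := ContinuousLinearEquiv.ofBijective T' hker hrange with he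
      refine ⟨‖(e.symm : ↥(H₁ ⊔ H₂) →L[ℂ] (H₁ × H₂))‖, fun p => ?_⟩
      have h1 : e.symm (e p) = p := e.symm_apply_apply p
      have h2 : (e p : ↥(H₁ ⊔ H₂)) = T' p := rfl
      have h3 : ‖T' p‖ = ‖T p‖ := rfl
      calc ‖p‖ = ‖e.symm (T' p)‖ := by rw [← h2, h1]
      _ ≤ ‖(e.symm : ↥(H₁ ⊔ H₂) →L[ℂ] (H₁ × H₂))‖ * ‖T' p‖ :=
          (e.symm : ↥(H₁ ⊔ H₂) →L[ℂ] (H₁ × H₂)).le_opNorm _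
      _ = ‖(e.symm : ↥(H₁ ⊔ H₂) →L[ℂ] (H₁ × H₂))‖ * ‖T p‖ := by rw [h3]
    obtain ⟨C, hbound⟩ := hboundE
    refine stmt5_forward_final H₁ H₂ (le_max_right C 1) ?_
    intro x hx y hy
    have hb := hbound (⟨x, hx⟩, ⟨y, hy⟩)
    rw [Prod.norm_def] at hb
    have hTp : T (⟨x, hx⟩, ⟨y, hy⟩) = x + y := stmt5_T_apply H₁ H₂ _
    rw [hTp] at hb
    calc max ‖x‖ ‖y‖ ≤ C * ‖x + y‖ := hb
    _ ≤ max C 1 * ‖x + y‖ :=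
        mul_le_mul_of_nonneg_right (le_max_left _ _) (norm_nonneg _)
  · intro hlt
    set c := ‖proj H₁ * proj H₂‖ with hc
    have hc0 : 0 ≤ c := norm_nonneg _
    have hip : ∀ x ∈ H₁, ∀ y ∈ H₂, ‖(inner ℂ x y)‖ ≤ c * (‖x‖ * ‖y‖) := by
      intro x hx y hy
      rw [stmt5_inner_eq H₁ H₂ hx hy]
      calc ‖(inner ℂ x ((proj H₁ * proj H₂) y))‖ ≤ ‖x‖ * ‖(proj H₁ * proj H₂) y‖ :=
            norm_inner_le_norm _ _
      _ ≤ ‖x‖ * (c * ‖y‖) := by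
          exact mul_le_mul_of_nonneg_left ((proj H₁ * proj H₂).le_opNorm y) (norm_nonneg x)
      _ = c * (‖x‖ * ‖y‖) := by ring
    have hest : ∀ x ∈ H₁, ∀ y ∈ H₂, (1 - c) * (‖x‖ ^ 2 + ‖y‖ ^ 2) ≤ ‖x + y‖ ^ 2 := by
      intro x hx y hy
      have h1 := hip x hx y hy
      have h2 : -‖(inner ℂ x y)‖ ≤ RCLike.re (inner ℂ x y) := by
        have := abs_le.1 (RCLike.abs_re_le_norm (inner ℂ x y))
        linarith [this.1]
      rw [norm_add_sq (𝕜 := ℂ)]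
      nlinarith [norm_nonneg x, norm_nonneg y, sq_nonneg (‖x‖ - ‖y‖)]
    constructor
    · rw [Submodule.eq_bot_iff]
      intro v hv
      by_contra hv0
      have h1 := hip v hv.1 v hv.2
      have h2 : (inner ℂ v v) = (‖v‖ : ℂ) ^ 2 := inner_self_eq_norm_sq_to_K v
      rw [h2] at h1
      have h3 : ‖((‖v‖ : ℂ)) ^ 2‖ = ‖v‖ ^ 2 := by
        rw [norm_pow, Complex.norm_real, Real.norm_eq_abs, abs_of_nonneg (norm_nonneg v)]
      rw [h3] at h1
      have hvpos : 0 < ‖v‖ := norm_pos_iff.2 hv0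
      have hsq : ‖v‖ * ‖v‖ = ‖v‖ ^ 2 := (sq ‖v‖).symm
      rw [hsq] at h1
      nlinarith [mul_pos hvpos hvpos, sq_nonneg ‖v‖, mul_pos (sub_pos.2 hlt) (mul_pos hvpos hvpos)]
    · -- antilipschitz estimate
      set T := stmt5_T H₁ H₂ with hT
      have hcond : ∀ p : H₁ × H₂, ‖p‖ ≤ ((Real.sqrt (1 - c))⁻¹ : ℝ) * ‖T p‖ := by
        intro p
        have hTp : T p = (p.1 : H) + (p.2 : H) := stmt5_T_apply H₁ H₂ p
        have he := hest p.1 p.1.2 p.2 p.2.2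
        rw [← hTp] at he
        have hs1 : 0 < 1 - c := by linarith
        have hpn : ‖p‖ = max ‖(p.1 : H)‖ ‖(p.2 : H)‖ := Prod.norm_def p
        have hp2 : ‖p‖ ^ 2 ≤ ‖(p.1 : H)‖ ^ 2 + ‖(p.2 : H)‖ ^ 2 := by
          rw [hpn]
          rcases max_cases ‖(p.1 : H)‖ ‖(p.2 : H)‖ with ⟨h, _⟩ | ⟨h, _⟩ <;> rw [h] <;>
            nlinarith [norm_nonneg (p.1 : H), norm_nonneg (p.2 : H)]
        have hkey : (1 - c) * ‖p‖ ^ 2 ≤ ‖T p‖ ^ 2 := by nlinarith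
        have hTnn : 0 ≤ ‖T p‖ := norm_nonneg _
        have hpnn : 0 ≤ ‖p‖ := norm_nonneg _
        have hsq := Real.sqrt_le_sqrt hkey
        rw [Real.sqrt_mul hs1.le, Real.sqrt_sq hpnn, Real.sqrt_sq hTnn] at hsq
        rw [inv_mul_eq_div, le_div_iff₀ (Real.sqrt_pos.2 hs1)]
        nlinarith [hsq]
      have hanti : AntilipschitzWith (⟨(Real.sqrt (1 - c))⁻¹, by positivity⟩) T :=
        AddMonoidHomClass.antilipschitz_of_bound T hcond
      have hclosed := hanti.isClosed_range T.uniformContinuous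
      rw [stmt5_T_range] at hclosed
      exact hclosed
end

section
/- Let H be a complex Hilbert space, H₁, …, Hₙ closed subspaces of H, and P₁, …, Pₙ the orthogonal projections onto them. Then the sum H₁ + … + Hₙ is closed in H if and only if there exists ε > 0 such that the spectrum of P₁ + … + Pₙ does not meet the open interval (0, ε). -/
open scoped InnerProductSpace in
private theorem closed_of_gap {H : Type*} [NormedAddCommGroup H] [InnerProductSpace ℂ H] [CompleteSpace H]
    (S : H →L[ℂ] H) (hsa : IsSelfAdjoint S)
    (ε : ℝ) (hε : 0 < ε)
    (hspec : ∀ t ∈ spectrum ℝ S, t = 0 ∨ ε ≤ t)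
    (M : Submodule ℂ H)
    (hSmem : ∀ x, S x ∈ M)
    (hkerS : ∀ x, S x = 0 → x ∈ Mᗮ) :
    IsClosed (M : Set H) := by
  set g : ℝ → ℝ := fun t => max 0 (min 1 (2/ε * t - 1)) with hg
  have hgc : Continuous g := by fun_prop
  have hg0 : ∀ t < ε/2, g t = 0 := by
    intro t ht
    have hv : 2/ε * t - 1 < 0 := by
      rw [sub_neg, div_mul_eq_mul_div, mul_comm, div_lt_one hε]; linarith
    rw [hg]
    simp only
    rw [min_eq_right (by linarith), max_eq_left (by linarith)]
  have hg1 : ∀ t, ε ≤ t → g t = 1 := by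
    intro t ht
    have h1 : (1:ℝ) ≤ 2/ε * t - 1 := by
      have : (2:ℝ) ≤ 2/ε * t := by
        rw [div_mul_eq_mul_div, le_div_iff₀ hε]; nlinarith
      linarith
    rw [hg]
    simp only
    rw [min_eq_left h1, max_eq_right (by norm_num)]
  set h : ℝ → ℝ := fun t => g t * (max t (ε/2))⁻¹ with hh
  have hpos2 : ∀ t : ℝ, (0:ℝ) < max t (ε/2) :=
    fun t => lt_of_lt_of_le (half_pos hε) (le_max_right _ _)
  have hhc : Continuous h := hgc.mul (Continuous.inv₀ (by fun_prop) fun t => (hpos2 t).ne')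
  have hgfac : ∀ t, t * h t = g t := by
    intro t
    rcases lt_or_ge t (ε/2) with hlt | hge
    · rw [hh]; simp only; rw [hg0 t hlt]; simp
    · rw [hh]; simp only
      rw [max_eq_left hge, mul_comm (g t), ← mul_assoc,
        mul_inv_cancel₀ (ne_of_gt (lt_of_lt_of_le (half_pos hε) hge)), one_mul]
  set E : H →L[ℂ] H := cfc g S with hE
  have hgg : ∀ t ∈ spectrum ℝ S, g t * g t = g t := by
    intro t ht
    rcases hspec t ht with h0 | h1
    · subst h0; rw [hg0 0 (by positivity)]; ring
    · rw [hg1 t h1]; ring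
  have htg : ∀ t ∈ spectrum ℝ S, t * g t = t := by
    intro t ht
    rcases hspec t ht with h0 | h1
    · subst h0; ring
    · rw [hg1 t h1]; ring
  have hSE : S * E = S := by
    have h1 : cfc (fun t => t * g t) S = cfc (fun t : ℝ => t) S :=
      cfc_congr htg
    rw [cfc_mul (fun t : ℝ => t) g S (by fun_prop) (by fun_prop), cfc_id' ℝ S] at h1
    rw [hE, h1]
  have hEfac : E = S * cfc h S := by
    have h1 : cfc (fun t => t * h t) S = cfc g S := cfc_congr fun t _ => hgfac t
    rw [cfc_mul (fun t : ℝ => t) h S (by fun_prop) (by fun_prop), cfc_id' ℝ S] at h1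
    rw [hE, ← h1]
  -- now the closure argument
  apply isClosed_of_closure_subset
  intro x hx
  have hEx : E x ∈ M := by rw [hEfac]; exact hSmem _
  have hxE : x - E x ∈ Mᗮ := by
    apply hkerS
    have h2 : S (x - E x) = S x - (S * E) x := by
      simp [ContinuousLinearMap.mul_apply, map_sub]
    rw [h2, hSE, sub_self]
  have hxcl : x - E x ∈ Mᗮᗮ := by
    have hMsub : closure (M : Set H) ⊆ (Mᗮᗮ : Set H) :=
      closure_minimal (Submodule.le_orthogonal_orthogonal M) (Submodule.isClosed_orthogonal Mᗮ)
    exact Submodule.sub_mem _ (hMsub hx) (Submodule.le_orthogonal_orthogonal M hEx)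
  have h0 : x - E x = 0 := by
    rw [← inner_self_eq_zero (𝕜 := ℂ)]
    exact (Submodule.mem_orthogonal _ _).mp hxcl _ hxE
  have hxe : x = E x := by rwa [sub_eq_zero] at h0
  rw [hxe]; exact hEx

open scoped InnerProductSpace in
private theorem gap_of_coercive {H : Type*} [NormedAddCommGroup H] [InnerProductSpace ℂ H]
    [CompleteSpace H] (S : H →L[ℂ] H) (hsa : IsSelfAdjoint S) (M : Submodule ℂ H)
    (hM : IsClosed (M : Set H)) (hSmem : ∀ x, S x ∈ M) (hker : ∀ x ∈ Mᗮ, S x = 0)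
    (c : ℝ) (hc : 0 < c) (hcoer : ∀ m ∈ M, c * ‖m‖^2 ≤ RCLike.re ⟪S m, m⟫_ℂ) :
    ∀ t ∈ Set.Ioo (0:ℝ) c, (t : ℂ) ∉ spectrum ℂ S := by
  haveI : CompleteSpace M := hM.completeSpace_coe
  intro t ht
  rw [spectrum.notMem_iff]
  set T : H →L[ℂ] H := algebraMap ℂ (H →L[ℂ] H) (t:ℂ) - S with hT
  have Tapp : ∀ x, T x = (t:ℂ) • x - S x := by
    intro x
    rw [hT, ContinuousLinearMap.sub_apply, Algebra.algebraMap_eq_smul_one,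
      ContinuousLinearMap.smul_apply, ContinuousLinearMap.one_apply]
  set δ : ℝ := min t (c - t) with hδdef
  have hδ : 0 < δ := lt_min ht.1 (by linarith [ht.2])
  have key : ∀ x, δ * ‖x‖ ≤ ‖T x‖ := by
    intro x
    set m : H := (Submodule.orthogonalProjectionOnto M x : H) with hm
    set w : H := x - m with hwdef
    have hw : w ∈ Mᗮ := Submodule.sub_starProjection_mem_orthogonal x
    have hmM : m ∈ M := (Submodule.orthogonalProjectionOnto M x).2
    have hxmw : x = m + w := by rw [hwdef]; abel
    have hTx : T x = ((t:ℂ) • m - S m) + (t:ℂ) • w := by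
      rw [Tapp, hxmw, map_add, hker w hw, smul_add]
      abel
    have haM : (t:ℂ) • m - S m ∈ M := Submodule.sub_mem _ (Submodule.smul_mem _ _ hmM) (hSmem m)
    have hbM : (t:ℂ) • w ∈ Mᗮ := Submodule.smul_mem _ _ hw
    have hib : ⟪(t:ℂ) • m - S m, (t:ℂ) • w⟫_ℂ = 0 :=
      (Submodule.mem_orthogonal _ _).mp hbM _ haM
    have hTx2 : ‖T x‖^2 = ‖(t:ℂ) • m - S m‖^2 + ‖(t:ℂ) • w‖^2 := by
      rw [hTx, pow_two, pow_two, pow_two]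
      exact norm_add_sq_eq_norm_sq_add_norm_sq_of_inner_eq_zero _ _ hib
    have hbound1 : (c - t) * ‖m‖ ≤ ‖(t:ℂ) • m - S m‖ := by
      have h1 : RCLike.re ⟪S m - (t:ℂ) • m, m⟫_ℂ = RCLike.re ⟪S m, m⟫_ℂ - t * ‖m‖^2 := by
        rw [inner_sub_left, inner_smul_left, map_sub]
        congr 1
        rw [inner_self_eq_norm_sq_to_K, Complex.conj_ofReal]
        simp [RCLike.mul_re, RCLike.ofReal_re, RCLike.ofReal_im]
        left
        rw [← Complex.ofReal_pow, Complex.ofReal_re]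
      have h2 : RCLike.re ⟪S m - (t:ℂ) • m, m⟫_ℂ ≤ ‖S m - (t:ℂ) • m‖ * ‖m‖ := re_inner_le_norm _ _
      have h3 := hcoer m hmM
      have h4 : ‖(t:ℂ) • m - S m‖ = ‖S m - (t:ℂ) • m‖ := norm_sub_rev _ _
      rcases eq_or_ne m 0 with h | h
      · simp [h]
      · have hm0 : 0 < ‖m‖ := norm_pos_iff.mpr h
        rw [h4]
        nlinarith
    have hbound2 : ‖(t:ℂ) • w‖ = t * ‖w‖ := by
      rw [norm_smul, Complex.norm_real]
      · rw [Real.norm_eq_abs, abs_of_pos ht.1]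
    have hx2 : ‖x‖^2 = ‖m‖^2 + ‖w‖^2 := by
      rw [hxmw, pow_two, pow_two, pow_two]
      exact norm_add_sq_eq_norm_sq_add_norm_sq_of_inner_eq_zero _ _
        ((Submodule.mem_orthogonal _ _).mp hw _ hmM)
    have hδt : δ ≤ t := min_le_left _ _
    have hδc : δ ≤ c - t := min_le_right _ _
    have hnm : 0 ≤ ‖m‖ := norm_nonneg _
    have hnw : 0 ≤ ‖w‖ := norm_nonneg _
    have hnx : 0 ≤ ‖x‖ := norm_nonneg _
    have hnT : 0 ≤ ‖T x‖ := norm_nonneg _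
    have hsq : (δ * ‖x‖)^2 ≤ ‖T x‖^2 := by
      have e1 : (δ * ‖x‖)^2 = δ^2 * ‖m‖^2 + δ^2 * ‖w‖^2 := by rw [mul_pow, hx2]; ring
      rw [e1, hTx2]
      have hct : (0:ℝ) ≤ c - t := by linarith [ht.2]
      have b1 : δ^2 * ‖m‖^2 ≤ ‖(t:ℂ) • m - S m‖^2 := by
        nlinarith [mul_nonneg hct hnm, mul_nonneg hδ.le hnm, hbound1,
          mul_le_mul_of_nonneg_right hδc hnm]
      have b2 : δ^2 * ‖w‖^2 ≤ ‖(t:ℂ) • w‖^2 := by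
        rw [hbound2]
        nlinarith [mul_nonneg hδ.le hnw, mul_le_mul_of_nonneg_right hδt hnw]
      linarith
    nlinarith [mul_nonneg hδ.le hnx]
  have hinj : Function.Injective T := by
    intro x y hxy
    have h0 : T (x - y) = 0 := by rw [map_sub, hxy, sub_self]
    have := key (x - y)
    rw [h0, norm_zero] at this
    have : ‖x - y‖ ≤ 0 := by
      by_contra hcon
      push_neg at hcon
      nlinarith
    rw [← sub_eq_zero]
    exact norm_le_zero_iff.mp this
  have hant : AntilipschitzWith (⟨δ⁻¹, by positivity⟩ : NNReal) T := by
    apply T.antilipschitz_of_bound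
    intro x
    have := key x
    change ‖x‖ ≤ δ⁻¹ * ‖T x‖
    rw [inv_mul_eq_div, le_div_iff₀ hδ]
    linarith [key x]
  have hclosed : IsClosed (Set.range T) := hant.isClosed_range T.uniformContinuous
  have hrange : LinearMap.range (T : H →ₗ[ℂ] H) = ⊤ := by
    have hRclosed : IsClosed ((LinearMap.range (T : H →ₗ[ℂ] H) : Submodule ℂ H) : Set H) := by
      rwa [LinearMap.coe_range]
    haveI : CompleteSpace (LinearMap.range (T : H →ₗ[ℂ] H)) := hRclosed.completeSpace_coe
    rw [← Submodule.orthogonal_eq_bot_iff]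
    rw [Submodule.eq_bot_iff]
    intro y hy
    have hTy : T y = 0 := by
      apply ext_inner_left ℂ
      intro v
      rw [inner_zero_right]
      have hsym : (T : H →ₗ[ℂ] H).IsSymmetric := by
        rw [← ContinuousLinearMap.isSelfAdjoint_iff_isSymmetric]
        have hts : IsSelfAdjoint (algebraMap ℂ (H →L[ℂ] H) (t:ℂ)) :=
          IsSelfAdjoint.algebraMap _ (by simp [IsSelfAdjoint, Complex.conj_ofReal])
        exact hts.sub hsa
      rw [show (T y) = (T : H →ₗ[ℂ] H) y from rfl, ← hsym v y]
      exact (Submodule.mem_orthogonal _ _).mp hy _ (LinearMap.mem_range_self (T : H →ₗ[ℂ] H) v)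
    have := hinj (hTy.trans (map_zero T).symm)
    exact this
  have hsurj : Function.Surjective T := LinearMap.range_eq_top.mp hrange
  exact ContinuousLinearMap.isUnit_iff_bijective.mpr ⟨hinj, hsurj⟩

open scoped InnerProductSpace in
private theorem coercive_of_closed {H : Type*} [NormedAddCommGroup H] [InnerProductSpace ℂ H]
    [CompleteSpace H] {n : ℕ} (H_ : Fin n → Submodule ℂ H) [∀ i, CompleteSpace (H_ i)]
    (hcl : IsClosed ((⨆ i, H_ i : Submodule ℂ H) : Set H)) :
    ∃ c > (0:ℝ), ∀ m ∈ (⨆ i, H_ i : Submodule ℂ H),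
      c * ‖m‖^2 ≤ ∑ i, ‖(Submodule.orthogonalProjectionOnto (H_ i) m : H)‖^2 := by
  set M : Submodule ℂ H := ⨆ i, H_ i with hM
  haveI : CompleteSpace M := hcl.completeSpace_coe
  set L : (Π i, H_ i) →ₗ[ℂ] M :=
    { toFun := fun x => ⟨∑ i, (x i : H),
        Submodule.sum_mem _ fun i _ => Submodule.mem_iSup_of_mem i (x i).2⟩
      map_add' := by
        intro x y
        ext
        simp [Finset.sum_add_distrib]
      map_smul' := by
        intro c x
        ext
        simp [Finset.smul_sum] } with hL
  have hLbound : ∀ x, ‖L x‖ ≤ (n:ℝ) * ‖x‖ := by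
    intro x
    have h1 : ‖L x‖ = ‖∑ i, (x i : H)‖ := rfl
    rw [h1]
    calc ‖∑ i, (x i : H)‖ ≤ ∑ i, ‖(x i : H)‖ := norm_sum_le _ _
    _ ≤ ∑ _i : Fin n, ‖x‖ := by
        apply Finset.sum_le_sum
        intro i _
        exact norm_le_pi_norm x i
    _ = (n:ℝ) * ‖x‖ := by simp [Finset.sum_const, Finset.card_univ]
  set Φ : (Π i, H_ i) →L[ℂ] M := L.mkContinuous n hLbound with hΦ
  have hsurj : Function.Surjective Φ := by
    intro y
    obtain ⟨f, hf1, hf2⟩ := (Submodule.mem_iSup_iff_exists_finsupp _ _).mp y.2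
    refine ⟨fun i => ⟨f i, hf1 i⟩, ?_⟩
    ext
    show (∑ i, (f i : H)) = (y : H)
    rw [← hf2, Finsupp.sum_fintype]
    intro i; rfl
  obtain ⟨C, hC, hCle⟩ := Φ.exists_preimage_norm_le hsurj
  refine ⟨(C^2 * n + 1)⁻¹, by positivity, ?_⟩
  intro m hm
  obtain ⟨x, hx, hxn⟩ := hCle ⟨m, hm⟩
  have hxnorm : ‖x‖ ≤ C * ‖m‖ := hxn
  have hsum : (∑ i, (x i : H)) = m := congrArg Subtype.val hx
  set B : ℝ := ∑ i, ‖(Submodule.orthogonalProjectionOnto (H_ i) m : H)‖ with hB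
  have hBnn : 0 ≤ B := Finset.sum_nonneg fun i _ => norm_nonneg _
  have key1 : ‖m‖^2 ≤ C * ‖m‖ * B := by
    have e1 : ‖m‖^2 = RCLike.re ⟪m, m⟫_ℂ := by
      rw [inner_self_eq_norm_sq]
    have e2 : ⟪m, m⟫_ℂ = ∑ i, ⟪(x i : H), m⟫_ℂ := by
      nth_rw 1 [← hsum]
      exact sum_inner _ _ _
    have e3 : ∀ i : Fin n, RCLike.re ⟪(x i : H), m⟫_ℂ
        ≤ (C * ‖m‖) * ‖(Submodule.orthogonalProjectionOnto (H_ i) m : H)‖ := by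
      intro i
      have horth : ⟪(x i : H), m - Submodule.orthogonalProjectionOnto (H_ i) m⟫_ℂ = 0 :=
        (Submodule.mem_orthogonal _ _).mp (Submodule.sub_starProjection_mem_orthogonal m) _ (x i).2
      have e4 : ⟪(x i : H), m⟫_ℂ = ⟪(x i : H), (Submodule.orthogonalProjectionOnto (H_ i) m : H)⟫_ℂ := by
        nth_rw 1 [show m = (Submodule.orthogonalProjectionOnto (H_ i) m : H)
          + (m - Submodule.orthogonalProjectionOnto (H_ i) m) by abel]
        rw [inner_add_right, horth, add_zero]
      rw [e4]
      calc RCLike.re ⟪(x i : H), (Submodule.orthogonalProjectionOnto (H_ i) m : H)⟫_ℂ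
          ≤ ‖(x i : H)‖ * ‖(Submodule.orthogonalProjectionOnto (H_ i) m : H)‖ := re_inner_le_norm _ _
        _ ≤ (C * ‖m‖) * ‖(Submodule.orthogonalProjectionOnto (H_ i) m : H)‖ := by
            apply mul_le_mul_of_nonneg_right _ (norm_nonneg _)
            exact le_trans (norm_le_pi_norm x i) hxnorm
    calc ‖m‖^2 = RCLike.re ⟪m, m⟫_ℂ := e1
      _ = ∑ i, RCLike.re ⟪(x i : H), m⟫_ℂ := by rw [e2, map_sum]
      _ ≤ ∑ i, (C * ‖m‖) * ‖(Submodule.orthogonalProjectionOnto (H_ i) m : H)‖ :=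
          Finset.sum_le_sum fun i _ => e3 i
      _ = C * ‖m‖ * B := by rw [hB, Finset.mul_sum]
  have key2 : B^2 ≤ (n:ℝ) * ∑ i, ‖(Submodule.orthogonalProjectionOnto (H_ i) m : H)‖^2 := by
    have := sq_sum_le_card_mul_sum_sq
      (s := (Finset.univ : Finset (Fin n)))
      (f := fun i => ‖(Submodule.orthogonalProjectionOnto (H_ i) m : H)‖)
    simpa [Finset.card_univ, hB] using this
  set r : ℝ := ∑ i, ‖(Submodule.orthogonalProjectionOnto (H_ i) m : H)‖^2 with hr
  have hrnn : 0 ≤ r := Finset.sum_nonneg fun i _ => sq_nonneg _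
  clear hsum hxnorm hxn hx x hCle hsurj hΦ Φ hLbound hL L
  rcases eq_or_ne m 0 with h0 | h0
  · rw [h0, norm_zero]
    simpa using hrnn
  · have hmpos : 0 < ‖m‖ := norm_pos_iff.mpr h0
    have hA : ‖m‖ ≤ C * B := by nlinarith
    have hA2 : ‖m‖^2 ≤ C^2 * B^2 := by nlinarith
    have h5 : ‖m‖^2 ≤ (C^2 * n) * r := by nlinarith
    have h6 : ((C^2 * n + 1):ℝ)⁻¹ * (C^2*n+1) = 1 := inv_mul_cancel₀ (by positivity)
    have h7 : ‖m‖^2 ≤ (C^2*(n:ℝ)+1) * r := by nlinarith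
    calc (C^2*(n:ℝ)+1)⁻¹ * ‖m‖^2 ≤ (C^2*(n:ℝ)+1)⁻¹ * ((C^2*(n:ℝ)+1) * r) :=
          mul_le_mul_of_nonneg_left h7 (by positivity)
      _ = r := by rw [← mul_assoc, h6, one_mul]

open scoped InnerProductSpace in
/-- `H₁ + … + Hₙ` is closed iff there is `ε > 0` such that the spectrum of
`P₁ + … + Pₙ` does not meet the interval `(0, ε)`. -/
theorem stmt8 {H : Type*} [NormedAddCommGroup H] [InnerProductSpace ℂ H] [CompleteSpace H]
    {n : ℕ} (H_ : Fin n → Submodule ℂ H) [∀ i, CompleteSpace (H_ i)] :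
    IsClosed ((⨆ i, H_ i : Submodule ℂ H) : Set H) ↔
      ∃ ε > (0 : ℝ), ∀ t : ℝ, t ∈ Set.Ioo (0 : ℝ) ε →
        (t : ℂ) ∉ spectrum ℂ (∑ i, proj (H_ i)) := by
  set S : H →L[ℂ] H := ∑ i, proj (H_ i) with hS
  set M : Submodule ℂ H := ⨆ i, H_ i with hM
  -- basic facts
  have hsai : ∀ (K : Submodule ℂ H) [CompleteSpace K], IsSelfAdjoint (proj K) :=
    fun K _ => isSelfAdjoint_starProjection K
  have hsa : IsSelfAdjoint S := by
    rw [hS, IsSelfAdjoint, star_sum]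
    exact Finset.sum_congr rfl fun i _ => (hsai (H_ i)).star_eq
  have hpi : ∀ (K : Submodule ℂ H) [CompleteSpace K], (proj K).IsPositive := by
    intro K _
    have h1 := ContinuousLinearMap.isPositive_one.conj_adjoint (𝕜 := ℂ) (proj K)
    have h2 : proj K ∘L (1 : H →L[ℂ] H) ∘L ContinuousLinearMap.adjoint (proj K) = proj K := by
      rw [(hsai K).adjoint_eq]
      ext x
      simp [proj, Submodule.orthogonalProjectionOnto_mem_subspace_eq_self, Submodule.starProjection_eq_self_iff]
    rwa [h2] at h1
  have hpos : S.IsPositive := by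
    rw [hS]
    induction (Finset.univ : Finset (Fin n)) using Finset.cons_induction with
    | empty => simpa using ContinuousLinearMap.isPositive_zero
    | cons i s his ih => rw [Finset.sum_cons]; exact (hpi (H_ i)).add ih
  have hnn : (0 : H →L[ℂ] H) ≤ S := (ContinuousLinearMap.nonneg_iff_isPositive S).mpr hpos
  have hspecnn : ∀ x ∈ spectrum ℝ S, 0 ≤ x := fun x hx => spectrum_nonneg_of_nonneg hnn hx
  have hspecc : ∀ (t : ℝ), ((t:ℂ) ∈ spectrum ℂ S ↔ t ∈ spectrum ℝ S) :=
    fun t => IsSelfAdjoint.coe_mem_spectrum_complex hsa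
  have hSapp : ∀ x, S x = ∑ i, (Submodule.orthogonalProjectionOnto (H_ i) x : H) := by
    intro x; rw [hS, ContinuousLinearMap.sum_apply]; rfl
  have hSmem : ∀ x, S x ∈ M := by
    intro x
    rw [hSapp]
    exact Submodule.sum_mem _ fun i _ =>
      Submodule.mem_iSup_of_mem i (Submodule.orthogonalProjectionOnto (H_ i) x).2
  -- inner identity for a single projection
  have hip : ∀ (K : Submodule ℂ H) [CompleteSpace K] (x : H),
      ⟪proj K x, x⟫_ℂ = (‖(Submodule.orthogonalProjectionOnto K x : H)‖:ℂ)^2 := by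
    intro K _ x
    have h1 : ⟪(Submodule.orthogonalProjectionOnto K x : H), x - Submodule.orthogonalProjectionOnto K x⟫_ℂ = 0 := by
      have h2 := Submodule.sub_starProjection_mem_orthogonal (K := K) x
      exact (Submodule.mem_orthogonal _ _).mp h2 _ (Submodule.orthogonalProjectionOnto K x).2
    have h2 : ⟪proj K x, x⟫_ℂ
        = ⟪(Submodule.orthogonalProjectionOnto K x : H), (Submodule.orthogonalProjectionOnto K x : H)⟫_ℂ := by
      have hpx : proj K x = (Submodule.orthogonalProjectionOnto K x : H) := rfl
      rw [hpx]
      nth_rw 2 [show x = (x - Submodule.orthogonalProjectionOnto K x) + Submodule.orthogonalProjectionOnto K x by abel]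
      rw [inner_add_right, h1, zero_add]
    rw [h2, inner_self_eq_norm_sq_to_K]
    norm_num
  have hSinner : ∀ x, ⟪S x, x⟫_ℂ = ∑ i, (‖(Submodule.orthogonalProjectionOnto (H_ i) x : H)‖:ℂ)^2 := by
    intro x
    rw [hS, ContinuousLinearMap.sum_apply, sum_inner]
    exact Finset.sum_congr rfl fun i _ => hip (H_ i) x
  have hSre : ∀ x, RCLike.re ⟪S x, x⟫_ℂ = ∑ i, ‖(Submodule.orthogonalProjectionOnto (H_ i) x : H)‖^2 := by
    intro x
    rw [hSinner x, map_sum]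
    refine Finset.sum_congr rfl fun i _ => ?_
    rw [← Complex.ofReal_pow]
    exact Complex.ofReal_re _
  have hkerS : ∀ x, S x = 0 → x ∈ Mᗮ := by
    intro x hx
    have h1 : ∑ i, ‖(Submodule.orthogonalProjectionOnto (H_ i) x : H)‖^2 = 0 := by
      rw [← hSre, hx, inner_zero_left, map_zero]
    have h2 : ∀ i : Fin n, ‖(Submodule.orthogonalProjectionOnto (H_ i) x : H)‖^2 = 0 := by
      intro i
      have := (Finset.sum_eq_zero_iff_of_nonneg
        (fun i _ => sq_nonneg ‖(Submodule.orthogonalProjectionOnto (H_ i) x : H)‖)).mp h1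
      exact this i (Finset.mem_univ i)
    have h3 : ∀ i : Fin n, x ∈ (H_ i)ᗮ := by
      intro i
      have h4 : Submodule.orthogonalProjectionOnto (H_ i) x = 0 := by
        have h5 : ‖(Submodule.orthogonalProjectionOnto (H_ i) x : H)‖ = 0 := by
          have := h2 i; nlinarith [norm_nonneg (Submodule.orthogonalProjectionOnto (H_ i) x : H)]
        have h6 : (Submodule.orthogonalProjectionOnto (H_ i) x : H) = 0 := norm_eq_zero.mp h5
        exact Subtype.ext h6
      exact Submodule.orthogonalProjectionOnto_eq_zero_iff.mp h4
    rw [hM, ← Submodule.iInf_orthogonal]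
    exact Submodule.mem_iInf _ |>.mpr fun i => h3 i
  constructor
  · -- closed → spectral gap
    intro hcl
    obtain ⟨c, hc, hcoer⟩ := coercive_of_closed H_ hcl
    refine ⟨c, hc, ?_⟩
    intro t ht
    refine gap_of_coercive S hsa M hcl hSmem (fun x hx => ?_) c hc (fun m hm => ?_) t ht
    · -- Mᗮ ⊆ ker S
      rw [hSapp]
      refine Finset.sum_eq_zero fun i _ => ?_
      have hxi : x ∈ (H_ i)ᗮ := by
        rw [hM, ← Submodule.iInf_orthogonal] at hx
        exact Submodule.mem_iInf _ |>.mp hx i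
      rw [Submodule.orthogonalProjectionOnto_eq_zero_iff.mpr hxi]
      simp
    · rw [hSre]
      exact hcoer m hm
  · -- spectral gap → closed
    rintro ⟨ε, hε, hgap⟩
    apply closed_of_gap S hsa ε hε _ M hSmem hkerS
    intro t ht
    rcases lt_or_ge t ε with hlt | hge
    · left
      by_contra h0
      have htpos : 0 < t := lt_of_le_of_ne (hspecnn t ht) (Ne.symm h0)
      exact hgap t ⟨htpos, hlt⟩ ((hspecc t).mpr ht)
    · right; exact hge
end
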